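/- For any finite set A, the sum over all subsets B ⊆ A of m_{|A|−1, |B|−1} is at most (c e^c/(e^c−1)) · H_{|A|}, where H_k = ∑_{t=1}^k 1/t is the k-th harmonic number. -/

import Mathlib

open MeasureTheory Real Finset

noncomputable def mcoef (c : ℝ) (a b : ℤ) : ℝ :=
  if a < 0 ∨ b < 0 then 0
  else ∫ p in (0:ℝ)..1,
    (c * Real.exp (c * p) / (Real.exp c - 1)) * p ^ b.toNat * (1 - p) ^ (a - b).toNat

noncomputable def harm (k : ℕ) : ℝ := ∑ t ∈ Finset.range k, (1 : ℝ) / (t + 1)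

noncomputable def gfun (c : ℝ) {U : Type*} [DecidableEq U] (f : Finset U → ℝ)
    (A : Finset U) : ℝ :=
  ∑ B ∈ A.powerset, mcoef c ((A.card : ℤ) - 1) ((B.card : ℤ) - 1) * f B

lemma mcoef_eval (c : ℝ) (n k : ℕ) (h1 : 1 ≤ k) (h2 : k ≤ n) :
    mcoef c ((n : ℤ) - 1) ((k : ℤ) - 1)
      = ∫ p in (0:ℝ)..1,
          (c * Real.exp (c * p) / (Real.exp c - 1)) * p ^ (k - 1) * (1 - p) ^ (n - k) := by
  rw [mcoef, if_neg (by omega)]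
  have h3 : ((k : ℤ) - 1).toNat = k - 1 := by omega
  have h4 : ((n : ℤ) - 1 - ((k : ℤ) - 1)).toNat = n - k := by omega
  rw [h3, h4]

lemma Gid (n : ℕ) {p : ℝ} (hp : p ≠ 0) :
    ∑ i ∈ Finset.range n, (n.choose (i+1) : ℝ) * (p ^ i * (1 - p) ^ (n - 1 - i))
      = ∑ j ∈ Finset.range n, (1 - p) ^ j := by
  apply mul_left_cancel₀ hp
  have hgeom := geom_sum_mul (1 - p) n
  have h1 : p * ∑ j ∈ Finset.range n, (1 - p) ^ j = 1 - (1 - p) ^ n := by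
    have : p * ∑ j ∈ Finset.range n, (1 - p) ^ j
        = -((∑ j ∈ Finset.range n, (1 - p) ^ j) * ((1 - p) - 1)) := by ring
    rw [this, hgeom]; ring
  have hadd := add_pow p (1 - p) n
  rw [Finset.sum_range_succ'] at hadd
  have h2 : p * ∑ i ∈ Finset.range n, (n.choose (i+1) : ℝ) * (p ^ i * (1 - p) ^ (n - 1 - i))
      = ∑ i ∈ Finset.range n, p ^ (i+1) * (1 - p) ^ (n - (i+1)) * (n.choose (i+1) : ℝ) := by
    rw [Finset.mul_sum]
    refine Finset.sum_congr rfl fun i hi => ?_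
    have : n - (i+1) = n - 1 - i := by omega
    rw [this]; ring
  rw [h1, h2]
  have h3 : ((p + (1 - p)) ^ n : ℝ) = 1 := by norm_num
  rw [h3] at hadd
  simp only [pow_zero, one_mul, Nat.choose_zero_right, Nat.cast_one, mul_one, Nat.sub_zero] at hadd
  linarith

theorem stmt_2 (c : ℝ) (hc0 : 0 < c) (hc1 : c ≤ 1) {α : Type*} [DecidableEq α]
    (A : Finset α) :
    ∑ B ∈ A.powerset, mcoef c ((A.card : ℤ) - 1) ((B.card : ℤ) - 1) ≤
      c * Real.exp c / (Real.exp c - 1) * harm A.card := by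
  set n := A.card with hn
  set w : ℝ → ℝ := fun p => c * Real.exp (c * p) / (Real.exp c - 1) with hw
  set K : ℝ := c * Real.exp c / (Real.exp c - 1) with hK
  have hE : 0 < Real.exp c - 1 := sub_pos.mpr (Real.one_lt_exp_iff.mpr hc0)
  have hwK : ∀ p ∈ Set.Icc (0:ℝ) 1, w p ≤ K := by
    intro p hp
    have hcp : c * p ≤ c := by nlinarith [hp.2]
    simp only [hw, hK]
    gcongr
  have hwpos : ∀ p ∈ Set.Icc (0:ℝ) 1, 0 ≤ w p := by
    intro p hp
    positivity
  -- continuity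
  have hwc : Continuous w := by fun_prop
  -- step 1: sum over powerset to binomial sum
  have step1 : ∑ B ∈ A.powerset, mcoef c ((A.card : ℤ) - 1) ((B.card : ℤ) - 1)
      = ∑ k ∈ Finset.range (n+1), (n.choose k : ℝ) * mcoef c ((n:ℤ)-1) ((k:ℤ)-1) := by
    rw [Finset.sum_powerset_apply_card (fun m => mcoef c ((n:ℤ)-1) ((m:ℤ)-1))]
    simp [nsmul_eq_mul]
    rfl
  rw [step1, Finset.sum_range_succ']
  have hzero : (n.choose 0 : ℝ) * mcoef c ((n:ℤ)-1) (((0:ℕ):ℤ)-1) = 0 := by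
    simp [mcoef]
  rw [hzero, add_zero]
  -- rewrite each term as integral
  have step2 : ∀ i ∈ Finset.range n,
      (n.choose (i+1) : ℝ) * mcoef c ((n:ℤ)-1) (((i+1:ℕ):ℤ)-1)
      = ∫ p in (0:ℝ)..1, (n.choose (i+1) : ℝ) * (w p * p ^ i * (1-p) ^ (n-1-i)) := by
    intro i hi
    rw [mem_range] at hi
    rw [mcoef_eval c n (i+1) (by omega) (by omega)]
    rw [← intervalIntegral.integral_const_mul]
    have e1 : (i+1) - 1 = i := by omega
    have e2 : n - (i+1) = n - 1 - i := by omega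
    rw [e1, e2]
  rw [Finset.sum_congr rfl step2]
  have hint : ∀ i ∈ Finset.range n, IntervalIntegrable
      (fun p => (n.choose (i+1) : ℝ) * (w p * p ^ i * (1-p) ^ (n-1-i))) volume 0 1 := by
    intro i _
    apply Continuous.intervalIntegrable
    fun_prop
  rw [← intervalIntegral.integral_finset_sum hint]
  have hintG : IntervalIntegrable
      (fun p => K * ∑ i ∈ Finset.range n, (n.choose (i+1) : ℝ) * (p ^ i * (1-p) ^ (n-1-i)))
      volume 0 1 := by
    apply Continuous.intervalIntegrable
    fun_prop
  have step3 : (∫ p in (0:ℝ)..1, ∑ i ∈ Finset.range n,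
        (n.choose (i+1) : ℝ) * (w p * p ^ i * (1-p) ^ (n-1-i)))
      ≤ ∫ p in (0:ℝ)..1, K * ∑ i ∈ Finset.range n,
        (n.choose (i+1) : ℝ) * (p ^ i * (1-p) ^ (n-1-i)) := by
    apply intervalIntegral.integral_mono_on zero_le_one
      (by apply Continuous.intervalIntegrable; fun_prop) hintG
    intro p hp
    have h1 : ∑ i ∈ Finset.range n, (n.choose (i+1) : ℝ) * (w p * p ^ i * (1-p) ^ (n-1-i))
        = w p * ∑ i ∈ Finset.range n, (n.choose (i+1) : ℝ) * (p ^ i * (1-p) ^ (n-1-i)) := by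
      rw [Finset.mul_sum]; exact Finset.sum_congr rfl fun i _ => by ring
    rw [h1]
    have hG : 0 ≤ ∑ i ∈ Finset.range n, (n.choose (i+1) : ℝ) * (p ^ i * (1-p) ^ (n-1-i)) := by
      apply Finset.sum_nonneg
      intro i _
      exact mul_nonneg (Nat.cast_nonneg _)
        (mul_nonneg (pow_nonneg hp.1 _) (pow_nonneg (by linarith [hp.2]) _))
    exact mul_le_mul_of_nonneg_right (hwK p hp) hG
  refine step3.trans ?_
  -- replace G by geometric sum on Ioc
  have step4 : (∫ p in (0:ℝ)..1, K * ∑ i ∈ Finset.range n,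
        (n.choose (i+1) : ℝ) * (p ^ i * (1-p) ^ (n-1-i)))
      = ∫ p in (0:ℝ)..1, K * ∑ j ∈ Finset.range n, (1-p) ^ j := by
    rw [intervalIntegral.integral_of_le zero_le_one,
        intervalIntegral.integral_of_le zero_le_one]
    apply setIntegral_congr_fun measurableSet_Ioc
    intro p hp
    dsimp only
    rw [Gid n (ne_of_gt hp.1)]
  rw [step4, intervalIntegral.integral_const_mul]
  have hintj : ∀ j ∈ Finset.range n, IntervalIntegrable
      (fun p : ℝ => (1-p) ^ j) volume 0 1 := by
    intro j _
    apply Continuous.intervalIntegrable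
    fun_prop
  rw [intervalIntegral.integral_finset_sum hintj]
  have step5 : ∀ j ∈ Finset.range n, (∫ p in (0:ℝ)..1, (1-p) ^ j) = 1 / (j+1 : ℝ) := by
    intro j _
    have := intervalIntegral.integral_comp_sub_left (fun u : ℝ => u ^ j) 1 (a := 0) (b := 1)
    simp only [sub_self, sub_zero] at this
    rw [this, integral_pow]
    norm_num
  rw [Finset.sum_congr rfl step5]
  rw [harm]
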